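/- Let p be a prime and let h be a power series over Z_p all of whose zeros (in the open unit disc of C_p) lie in pZ_p, with finitely many zeros. Let w' ∈ C_p with 0 < v_p(w') < ∞ such that v_p(w' − w'') = min(v_p(w'), v_p(w'')) for every w'' ∈ pZ_p. Set r = floor(v_p(w')). Then v_p(h(w')) = v_p(w') · #{zeros w'' of h with v_p(w'') ≥ r+1} + Σ_{v=1}^{r} v · #{zeros w'' of h with v_p(w'') = v}, where zeros are counted with multiplicity. -/

import Mathlib

open scoped Classical

/-- Let `p` be prime and `K` a field (modelling `C_p`) with additive valuation
`v : K → WithTop ℝ` compatible via `ι` with the `p`-adic valuation on `ℤ_[p]`.  Let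
`h(w) = Π_j (w - a_j)` with all zeros `a_j ∈ pℤ_p`.  Let `w' ∈ K` with `v(w') = α`,
`0 < α < ∞`, such that `v(w' - w'') = min(v(w'), v(w''))` for all `w'' ∈ pℤ_p`.
With `r = ⌊α⌋`, then `v(h(w')) = α·#{j : v(a_j) ≥ r+1} + Σ_{m=1}^{r} m·#{j : v(a_j) = m}`,
zeros counted with multiplicity. -/
theorem stmt_16 {p : ℕ} [Fact p.Prime] {K : Type} [Field K]
    (v : K → WithTop ℝ)
    (hv0 : ∀ x, v x = ⊤ ↔ x = 0)
    (hvmul : ∀ x y, v (x * y) = v x + v y)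
    (hvadd : ∀ x y, min (v x) (v y) ≤ v (x + y))
    (ι : ℤ_[p] →+* K)
    (hι : ∀ b : ℤ_[p], b ≠ 0 → v (ι b) = ((b.valuation : ℝ) : WithTop ℝ))
    (n : ℕ) (a : Fin n → ℤ_[p]) (ha : ∀ j, (p : ℤ_[p]) ∣ a j)
    (w' : K) (α : ℝ) (hw' : v w' = (α : WithTop ℝ)) (hα : 0 < α)
    (hmin : ∀ b : ℤ_[p], (p : ℤ_[p]) ∣ b → v (w' - ι b) = min (v w') (v (ι b))) :
    v (∏ j : Fin n, (w' - ι (a j))) =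
      ((α * ((Finset.univ.filter
            (fun j : Fin n => ((((⌊α⌋ : ℤ) + 1 : ℤ) : ℝ) : WithTop ℝ) ≤ v (ι (a j)))).card : ℝ)
        + ∑ m ∈ Finset.Icc (1 : ℤ) ⌊α⌋,
            (m : ℝ) * ((Finset.univ.filter
              (fun j : Fin n => v (ι (a j)) = (((m : ℤ) : ℝ) : WithTop ℝ))).card : ℝ)
        : ℝ) : WithTop ℝ) := by
  -- v 1 = 0
  have hv1 : v 1 = 0 := by
    have := hvmul w' 1
    rw [mul_one, hw'] at this
    have h2 : ((α : ℝ) : WithTop ℝ) + v 1 = ((α : ℝ) : WithTop ℝ) + 0 := by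
      rw [← this]; simp
    exact WithTop.add_left_cancel (WithTop.coe_ne_top) h2
  -- v of a product is the sum of v's
  have hprod : ∀ (s : Finset (Fin n)) (f : Fin n → K),
      v (∏ j ∈ s, f j) = ∑ j ∈ s, v (f j) := by
    intro s f
    induction s using Finset.cons_induction with
    | empty => simpa using hv1
    | cons j s hj ih =>
      rw [Finset.prod_cons, Finset.sum_cons, hvmul, ih]
  -- notation for the "big valuation" set
  set A : Finset (Fin n) :=
    Finset.univ.filter
      (fun j : Fin n => ((((⌊α⌋ : ℤ) + 1 : ℤ) : ℝ) : WithTop ℝ) ≤ v (ι (a j))) with hA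
  -- facts about j ∉ A
  have hnotA : ∀ j : Fin n, j ∉ A →
      a j ≠ 0 ∧ ((a j).valuation : ℤ) ∈ Finset.Icc (1 : ℤ) ⌊α⌋ := by
    intro j hj
    rw [hA, Finset.mem_filter] at hj
    push_neg at hj
    have hcond := hj (Finset.mem_univ j)
    have hne : a j ≠ 0 := by
      intro h0
      rw [show ι (a j) = 0 by rw [h0]; simp, (hv0 0).mpr rfl] at hcond
      exact not_top_lt hcond
    refine ⟨hne, ?_⟩
    rw [hι _ hne] at hcond
    have hlt : ((a j).valuation : ℝ) < (((⌊α⌋ : ℤ) + 1 : ℤ) : ℝ) :=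
      WithTop.coe_lt_coe.mp hcond
    have hval_le : (a j).valuation ≤ ⌊α⌋ := by
      have : (a j).valuation < (⌊α⌋ : ℤ) + 1 := by exact_mod_cast hlt
      omega
    have hval_ge : 1 ≤ ((a j).valuation : ℤ) := by
      obtain ⟨c, hc⟩ := ha j
      have hcne : c ≠ 0 := by rintro rfl; simp at hc; exact hne hc
      have : ((p : ℤ_[p]) ^ 1 * c).valuation = (1 : ℕ) + c.valuation :=
        PadicInt.valuation_p_pow_mul 1 c hcne
      rw [pow_one, ← hc] at this
      rw [this]
      have := Int.natCast_nonneg c.valuation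
      push_cast
      omega
    exact Finset.mem_Icc.mpr ⟨hval_ge, hval_le⟩
  -- the real-valued summand
  set g : Fin n → ℝ := fun j => if j ∈ A then α else ((a j).valuation : ℝ) with hg
  -- each factor has valuation g j
  have hterm : ∀ j : Fin n, v (w' - ι (a j)) = ((g j : ℝ) : WithTop ℝ) := by
    intro j
    rw [hmin (a j) (ha j), hw', hg]
    by_cases hj : j ∈ A
    · simp only [hj, if_true]
      rw [min_eq_left]
      rw [hA, Finset.mem_filter] at hj
      refine le_trans ?_ hj.2
      exact WithTop.coe_le_coe.mpr (by push_cast; exact (Int.lt_floor_add_one α).le)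
    · simp only [hj, if_false]
      obtain ⟨hne, hmem⟩ := hnotA j hj
      rw [hι _ hne, min_eq_right]
      exact WithTop.coe_le_coe.mpr
        (le_trans (Int.cast_le.mpr (Finset.mem_Icc.mp hmem).2) (Int.floor_le α))
  -- so the valuation of the product is the coercion of a real sum
  have hmain : v (∏ j : Fin n, (w' - ι (a j))) = ((∑ j : Fin n, g j : ℝ) : WithTop ℝ) := by
    rw [hprod]
    simp_rw [hterm]
    exact_mod_cast rfl
  rw [hmain]
  congr 1
  -- now pure real arithmetic: split the sum over A and Aᶜ
  rw [← Finset.sum_filter_add_sum_filter_not Finset.univ (fun j => j ∈ A) g]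
  have h1 : ∑ j ∈ Finset.univ.filter (fun j => j ∈ A), g j = α * (A.card : ℝ) := by
    rw [Finset.sum_congr rfl (fun j hj => ?_), Finset.sum_const, nsmul_eq_mul, mul_comm]
    · congr 1
      simp [Finset.filter_mem_eq_inter]
    · rw [Finset.mem_filter] at hj
      simp [hg, hj.2]
  rw [h1]
  congr 1
  -- the complement sum, fiberwise over the valuation
  set B := Finset.univ.filter (fun j => ¬ j ∈ A) with hB
  have hmaps : ∀ j ∈ B, ((a j).valuation : ℤ) ∈ Finset.Icc (1 : ℤ) ⌊α⌋ := by
    intro j hj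
    rw [hB, Finset.mem_filter] at hj
    exact (hnotA j hj.2).2
  rw [← Finset.sum_fiberwise_of_maps_to hmaps g]
  refine Finset.sum_congr rfl (fun m hm => ?_)
  have hcardeq : (B.filter (fun j => (a j).valuation = m)) =
      Finset.univ.filter (fun j : Fin n => v (ι (a j)) = (((m : ℤ) : ℝ) : WithTop ℝ)) := by
    ext j
    simp only [hB, Finset.mem_filter, Finset.mem_univ, true_and]
    constructor
    · rintro ⟨hjA, hval⟩
      rw [hι _ (hnotA j hjA).1, ← hval]; norm_cast
    · intro hv
      have hne : a j ≠ 0 := by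
        intro h0
        rw [show ι (a j) = 0 by rw [h0]; simp, (hv0 0).mpr rfl] at hv
        exact (WithTop.coe_ne_top (a := ((m : ℤ) : ℝ))) hv.symm
      rw [hι _ hne] at hv
      have hval : (a j).valuation = m := by
        exact_mod_cast WithTop.coe_injective hv
      refine ⟨?_, hval⟩
      intro hjA
      rw [hA, Finset.mem_filter] at hjA
      have := WithTop.coe_le_coe.mp (le_trans hjA.2 (le_of_eq (by rw [hι _ hne])))
      have hm2 := (Finset.mem_Icc.mp hm).2
      have : ((⌊α⌋ : ℤ) + 1 : ℤ) ≤ m := by rw [← hval]; exact_mod_cast this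
      omega
  have hgs : ∀ j ∈ B.filter (fun j => (a j).valuation = m), g j = (m : ℝ) := by
    intro j hj
    rw [Finset.mem_filter, hB, Finset.mem_filter] at hj
    simp [hg, hj.1.2, ← hj.2]
  rw [Finset.sum_congr rfl hgs, Finset.sum_const, nsmul_eq_mul, mul_comm, hcardeq]
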